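/- arXiv:1006.5652 — 2 statements merged into one kernel-verified Lean document; each statement's English description precedes it below -/
import Mathlib

section
/- For 0 < q < 1 and every complex number z with |z| < 1/(1-q), one has e_q(z) · E_q(-z) = 1, i.e. (∑_{n=0}^∞ z^n/[n]_q!) · (∑_{n=0}^∞ q^{n(n-1)/2} (-z)^n/[n]_q!) = 1. -/
/-- The q-integer `[k]_q = 1 + q + q^2 + ⋯ + q^(k-1)`. -/
noncomputable def qInt (q : ℝ) (k : ℕ) : ℝ := ∑ i ∈ Finset.range k, q ^ i

/-- The q-factorial `[n]_q! = [1]_q [2]_q ⋯ [n]_q`, with `[0]_q! = 1`. -/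
noncomputable def qFact (q : ℝ) (n : ℕ) : ℝ := ∏ k ∈ Finset.range n, qInt q (k + 1)

lemma qInt_one_le (q : ℝ) (hq0 : 0 < q) (k : ℕ) : 1 ≤ qInt q (k + 1) := by
  unfold qInt
  rw [Finset.sum_range_succ']
  simp only [pow_zero]
  have : 0 ≤ ∑ i ∈ Finset.range k, q ^ (i + 1) :=
    Finset.sum_nonneg fun i _ => by positivity
  linarith

lemma qInt_one_le' (q : ℝ) (hq0 : 0 < q) (k : ℕ) :
    1 ≤ ∑ i ∈ Finset.range (k + 1), q ^ i := qInt_one_le q hq0 k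

lemma qFact_succ (q : ℝ) (n : ℕ) : qFact q (n + 1) = qFact q n * qInt q (n + 1) :=
  Finset.prod_range_succ _ n

lemma qFact_succ' (q : ℝ) (n : ℕ) :
    qFact q (n + 1) = qFact q n * ∑ i ∈ Finset.range (n + 1), q ^ i :=
  qFact_succ q n

lemma qFact_zero (q : ℝ) : qFact q 0 = 1 := by simp [qFact]

lemma qFact_one_le (q : ℝ) (hq0 : 0 < q) (n : ℕ) : 1 ≤ qFact q n := by
  induction n with
  | zero => simp [qFact]
  | succ n ih =>
    rw [qFact_succ]
    have h := qInt_one_le q hq0 n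
    nlinarith

lemma qFact_pos (q : ℝ) (hq0 : 0 < q) (n : ℕ) : 0 < qFact q n :=
  lt_of_lt_of_le one_pos (qFact_one_le q hq0 n)

lemma qInt_add (q : ℝ) (a b : ℕ) : qInt q (a + b) = qInt q a + q ^ a * qInt q b := by
  unfold qInt
  rw [Finset.sum_range_add, Finset.mul_sum]
  congr 1
  exact Finset.sum_congr rfl fun i _ => (pow_add q a i)

/-- q-binomial coefficient, defined by the Pascal recurrence. -/
noncomputable def qb (q : ℝ) : ℕ → ℕ → ℝ
  | _, 0 => 1
  | 0, _ + 1 => 0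
  | n + 1, j + 1 => qb q n j + q ^ (j + 1) * qb q n (j + 1)

lemma qb_zero (q : ℝ) (n : ℕ) : qb q n 0 = 1 := by cases n <;> rfl

lemma qb_succ_succ (q : ℝ) (n j : ℕ) :
    qb q (n + 1) (j + 1) = qb q n j + q ^ (j + 1) * qb q n (j + 1) := rfl

lemma qb_eq_zero_of_lt (q : ℝ) : ∀ n j : ℕ, n < j → qb q n j = 0 := by
  intro n
  induction n with
  | zero => intro j hj; obtain ⟨j', rfl⟩ := Nat.exists_eq_add_of_lt hj; rfl
  | succ n ih =>
    intro j hj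
    obtain ⟨j', rfl⟩ : ∃ j', j = j' + 1 := ⟨j - 1, by omega⟩
    show qb q n j' + q ^ (j' + 1) * qb q n (j' + 1) = 0
    rw [ih j' (by omega), ih (j' + 1) (by omega)]
    ring

lemma qb_mul_qFact (q : ℝ) (hq0 : 0 < q) :
    ∀ a b : ℕ, qb q (a + b) a * (qFact q a * qFact q b) = qFact q (a + b) := by
  intro a
  induction a with
  | zero => intro b; simp [qb_zero, qFact]
  | succ a iha =>
    intro b
    induction b with
    | zero =>
      have h := iha 0
      have hpos := qFact_pos q hq0 a
      simp only [Nat.add_zero] at h ⊢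
      have hF0 : qFact q 0 = 1 := by simp [qFact]
      rw [hF0, mul_one] at h ⊢
      have hqa : qb q a a = 1 := by
        have := mul_right_cancel₀ hpos.ne' (h.trans (one_mul (qFact q a)).symm)
        exact this
      show (qb q a a + q ^ (a + 1) * qb q a (a + 1)) * qFact q (a + 1) = qFact q (a + 1)
      rw [hqa, qb_eq_zero_of_lt q a (a + 1) (by omega)]
      ring
    | succ b ihb =>
      have hidx : a + 1 + (b + 1) = (a + b + 1) + 1 := by omega
      rw [hidx]
      rw [show qb q (a + b + 1 + 1) (a + 1)
          = qb q (a + b + 1) a + q ^ (a + 1) * qb q (a + b + 1) (a + 1) from rfl]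
      have e1 := iha (b + 1)
      rw [show a + (b + 1) = a + b + 1 from by omega] at e1
      have e2 : qb q (a + b + 1) (a + 1) * (qFact q (a + 1) * qFact q b)
          = qFact q (a + b + 1) := by
        have h := ihb
        rw [show a + 1 + b = a + b + 1 from by omega] at h
        exact h
      have key : qInt q (a + b + 1 + 1) = qInt q (a + 1) + q ^ (a + 1) * qInt q (b + 1) := by
        rw [show a + b + 1 + 1 = (a + 1) + (b + 1) from by omega, qInt_add]
      rw [qFact_succ q (a + b + 1), key, qFact_succ q a, qFact_succ q b] at *
      linear_combination (qInt q (a + 1)) * e1 + (q ^ (a + 1) * qInt q (b + 1)) * e2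

lemma tri_succ (j : ℕ) : (j + 1) * (j + 2) / 2 = j * (j + 1) / 2 + (j + 1) := by
  obtain ⟨c, hc⟩ := Nat.even_mul_succ_self j
  have h2 : (j + 1) * (j + 2) = j * (j + 1) + 2 * (j + 1) := by ring
  omega

lemma alt_sum (q : ℝ) (n : ℕ) :
    ∑ j ∈ Finset.range (n + 2), (-1 : ℝ) ^ j * q ^ (j * (j - 1) / 2) * qb q (n + 1) j = 0 := by
  rw [Finset.sum_range_succ']
  have h0 : (-1 : ℝ) ^ 0 * q ^ (0 * (0 - 1) / 2) * qb q (n + 1) 0 = 1 := by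
    simp [qb_zero]
  rw [h0]
  set u : ℕ → ℝ := fun j => (-1) ^ j * q ^ (j * (j + 1) / 2) * qb q n j with hu
  have hterm : ∀ j,
      (-1 : ℝ) ^ (j + 1) * q ^ ((j + 1) * ((j + 1) - 1) / 2) * qb q (n + 1) (j + 1)
      = u (j + 1) - u j := by
    intro j
    rw [qb_succ_succ]
    simp only [hu]
    rw [show (j + 1) * ((j + 1) - 1) / 2 = j * (j + 1) / 2 from by
      rw [Nat.add_sub_cancel, Nat.mul_comm]]
    rw [show (j + 1) * ((j + 1) + 1) / 2 = j * (j + 1) / 2 + (j + 1) from tri_succ j]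
    rw [pow_add, pow_succ]
    ring
  rw [Finset.sum_congr rfl fun j _ => hterm j, Finset.sum_range_sub u (n + 1)]
  simp only [hu]
  rw [qb_eq_zero_of_lt q n (n + 1) (by omega), qb_zero]
  simp

lemma coeff_eq (q : ℝ) (hq0 : 0 < q) (z : ℂ) (n : ℕ) :
    ∑ kl ∈ Finset.HasAntidiagonal.antidiagonal n,
      (z ^ kl.1 / (qFact q kl.1 : ℂ)) *
        ((q : ℂ) ^ (kl.2 * (kl.2 - 1) / 2) * (-z) ^ kl.2 / (qFact q kl.2 : ℂ))
      = if n = 0 then 1 else 0 := by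
  have hterm : ∀ j ≤ n,
      (z ^ (n - j) / (qFact q (n - j) : ℂ)) *
        ((q : ℂ) ^ (j * (j - 1) / 2) * (-z) ^ j / (qFact q j : ℂ))
      = z ^ n / (qFact q n : ℂ) *
          (((-1 : ℝ) ^ j * q ^ (j * (j - 1) / 2) * qb q n j : ℝ) : ℂ) := by
    intro j hj
    have hfact : (qFact q j : ℂ) * (qFact q (n - j) : ℂ) * (qb q n j : ℂ)
        = (qFact q n : ℂ) := by
      have := qb_mul_qFact q hq0 j (n - j)
      rw [Nat.add_sub_cancel' hj] at this
      push_cast [← this]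
      ring
    have hz : z ^ (n - j) * z ^ j = z ^ n := by
      rw [← pow_add, Nat.sub_add_cancel hj]
    have h1 : (qFact q (n - j) : ℂ) ≠ 0 := by
      exact_mod_cast (qFact_pos q hq0 (n - j)).ne'
    have h2 : (qFact q j : ℂ) ≠ 0 := by
      exact_mod_cast (qFact_pos q hq0 j).ne'
    have h3 : (qFact q n : ℂ) ≠ 0 := by
      exact_mod_cast (qFact_pos q hq0 n).ne'
    rw [neg_pow]
    push_cast
    field_simp
    linear_combination (-((q : ℂ) ^ (j * (j - 1) / 2) * z ^ n)) * hfact +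
      ((q : ℂ) ^ (j * (j - 1) / 2) * (qFact q n : ℂ)) * hz
  rw [Finset.Nat.sum_antidiagonal_eq_sum_range_succ_mk]
  rw [← Finset.sum_range_reflect]
  have hsum : ∀ j ∈ Finset.range (n + 1),
      (fun k => (z ^ k / (qFact q k : ℂ)) *
        ((q : ℂ) ^ ((n - k) * ((n - k) - 1) / 2) * (-z) ^ (n - k) / (qFact q (n - k) : ℂ)))
        (n + 1 - 1 - j)
      = z ^ n / (qFact q n : ℂ) *
          (((-1 : ℝ) ^ j * q ^ (j * (j - 1) / 2) * qb q n j : ℝ) : ℂ) := by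
    intro j hjmem
    have hj : j ≤ n := by
      simp only [Finset.mem_range] at hjmem; omega
    simp only [Nat.add_sub_cancel]
    rw [show n - (n - j) = j from by omega]
    exact hterm j hj
  rw [Finset.sum_congr rfl hsum, ← Finset.mul_sum]
  rcases n with _ | m
  · simp [qFact_zero, qb_zero]
  · have hreal : (∑ j ∈ Finset.range (m + 1 + 1),
        ((-1 : ℝ) ^ j * q ^ (j * (j - 1) / 2) * qb q (m + 1) j)) = 0 := by
      have h := alt_sum q m
      rwa [show m + 2 = m + 1 + 1 from by omega] at h
    rw [← Complex.ofReal_sum, hreal]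
    simp

lemma norm_term (q : ℝ) (hq0 : 0 < q) (z : ℂ) (n : ℕ) :
    ‖z ^ n / (qFact q n : ℂ)‖ = ‖z‖ ^ n / qFact q n := by
  rw [norm_div, norm_pow, Complex.norm_real, Real.norm_eq_abs,
    abs_of_pos (qFact_pos q hq0 n)]

lemma summable_e (q : ℝ) (hq0 : 0 < q) (hq1 : q < 1) (z : ℂ)
    (hz : ‖z‖ < 1 / (1 - q)) :
    Summable fun n : ℕ => ‖z ^ n / (qFact q n : ℂ)‖ := by
  have h1q : 0 < 1 - q := by linarith
  set r : ℝ := ((1 - q) * ‖z‖ + 1) / 2 with hr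
  have hzr : (1 - q) * ‖z‖ < 1 := by
    have := mul_lt_mul_of_pos_left hz h1q
    rwa [mul_one_div, div_self h1q.ne'] at this
  have hr1 : r < 1 := by rw [hr]; linarith
  have hr0 : 0 < r := by
    have : 0 ≤ (1 - q) * ‖z‖ := by positivity
    rw [hr]; linarith
  have hlt : ‖z‖ / r < (1 - q)⁻¹ := by
    rw [inv_eq_one_div, div_lt_div_iff₀ hr0 h1q]
    nlinarith
  have htend : Filter.Tendsto (fun n => ∑ i ∈ Finset.range n, q ^ i)
      Filter.atTop (nhds (1 - q)⁻¹) :=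
    (hasSum_geometric_of_lt_one hq0.le hq1).tendsto_sum_nat
  have hev : ∀ᶠ n in Filter.atTop, ‖z‖ / r < ∑ i ∈ Finset.range n, q ^ i :=
    htend.eventually (lt_mem_nhds hlt)
  obtain ⟨N, hN⟩ := Filter.eventually_atTop.mp hev
  have key : Summable fun n : ℕ => ‖z‖ ^ n / qFact q n := by
    apply summable_of_ratio_norm_eventually_le hr1
    rw [Filter.eventually_atTop]
    refine ⟨N, fun n hn => ?_⟩
    have hI := hN (n + 1) (by omega)
    have hzb : ‖z‖ ≤ r * ∑ i ∈ Finset.range (n + 1), q ^ i := by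
      rw [div_lt_iff₀ hr0] at hI
      linarith [mul_comm r (∑ i ∈ Finset.range (n + 1), q ^ i)]
    have hFn := qFact_pos q hq0 n
    have hI1 := qInt_one_le' q hq0 n
    have hzn : (0:ℝ) ≤ ‖z‖ ^ n := by positivity
    have hF1 := qFact_pos q hq0 (n + 1)
    have hIpos : (0:ℝ) < ∑ i ∈ Finset.range (n + 1), q ^ i := by linarith
    rw [Real.norm_eq_abs, Real.norm_eq_abs,
      abs_of_nonneg (div_nonneg (pow_nonneg (norm_nonneg z) _) hF1.le),
      abs_of_nonneg (div_nonneg (pow_nonneg (norm_nonneg z) _) hFn.le),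
      qFact_succ', div_le_iff₀ (mul_pos hFn hIpos), pow_succ]
    have hR : r * (‖z‖ ^ n / qFact q n) * (qFact q n * ∑ i ∈ Finset.range (n + 1), q ^ i)
        = r * (∑ i ∈ Finset.range (n + 1), q ^ i) * ‖z‖ ^ n := by
      field_simp
    rw [hR]
    nlinarith [mul_le_mul_of_nonneg_left hzb hzn]
  have : (fun n : ℕ => ‖z ^ n / (qFact q n : ℂ)‖) = fun n => ‖z‖ ^ n / qFact q n :=
    funext fun n => norm_term q hq0 z n
  rw [this]; exact key

lemma exp_succ (n : ℕ) : (n + 1) * ((n + 1) - 1) / 2 = n * (n - 1) / 2 + n := by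
  rcases n with _ | m
  · simp
  · have h := tri_succ m
    simp only [Nat.add_sub_cancel]
    rw [show (m + 1 + 1) * (m + 1) = (m + 1) * (m + 2) from by ring,
      show (m + 1) * m = m * (m + 1) from by ring]
    omega

lemma summable_E (q : ℝ) (hq0 : 0 < q) (hq1 : q < 1) (z : ℂ) :
    Summable fun n : ℕ => ‖(q : ℂ) ^ (n * (n - 1) / 2) * (-z) ^ n / (qFact q n : ℂ)‖ := by
  have hnorm : ∀ n : ℕ, ‖(q : ℂ) ^ (n * (n - 1) / 2) * (-z) ^ n / (qFact q n : ℂ)‖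
      = q ^ (n * (n - 1) / 2) * ‖z‖ ^ n / qFact q n := by
    intro n
    simp [norm_div, norm_mul, norm_pow, Complex.norm_real, Real.norm_eq_abs,
      abs_of_pos hq0, abs_of_pos (qFact_pos q hq0 n)]
  have htend : Filter.Tendsto (fun n : ℕ => q ^ n * ‖z‖) Filter.atTop (nhds 0) := by
    have := (tendsto_pow_atTop_nhds_zero_of_lt_one hq0.le hq1).mul_const ‖z‖
    simpa using this
  have hev : ∀ᶠ n in Filter.atTop, q ^ n * ‖z‖ < 1 / 2 :=
    htend.eventually (gt_mem_nhds (by norm_num))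
  obtain ⟨N, hN⟩ := Filter.eventually_atTop.mp hev
  have key : Summable fun n : ℕ => q ^ (n * (n - 1) / 2) * ‖z‖ ^ n / qFact q n := by
    apply summable_of_ratio_norm_eventually_le (r := 1 / 2) (by norm_num)
    rw [Filter.eventually_atTop]
    refine ⟨N, fun n hn => ?_⟩
    have hb := (hN n hn).le
    have hFn := qFact_pos q hq0 n
    have hF1 := qFact_pos q hq0 (n + 1)
    have hS := qInt_one_le' q hq0 n
    have hSpos : (0:ℝ) < ∑ i ∈ Finset.range (n + 1), q ^ i := by linarith
    have hqe : (0:ℝ) < q ^ (n * (n - 1) / 2) := by positivity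
    have hzn : (0:ℝ) ≤ ‖z‖ ^ n := by positivity
    rw [Real.norm_eq_abs, Real.norm_eq_abs,
      abs_of_nonneg (div_nonneg (by positivity) hF1.le),
      abs_of_nonneg (div_nonneg (by positivity) hFn.le),
      qFact_succ', exp_succ, div_le_iff₀ (mul_pos hFn hSpos)]
    have hR : 1 / 2 * (q ^ (n * (n - 1) / 2) * ‖z‖ ^ n / qFact q n)
          * (qFact q n * ∑ i ∈ Finset.range (n + 1), q ^ i)
        = 1 / 2 * (∑ i ∈ Finset.range (n + 1), q ^ i) * (q ^ (n * (n - 1) / 2) * ‖z‖ ^ n) := by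
      field_simp
    rw [hR, pow_add, pow_succ]
    have h1 : q ^ (n * (n - 1) / 2) * q ^ n * (‖z‖ ^ n * ‖z‖)
        = (q ^ n * ‖z‖) * (q ^ (n * (n - 1) / 2) * ‖z‖ ^ n) := by ring
    rw [h1]
    have h2 : (q ^ n * ‖z‖) * (q ^ (n * (n - 1) / 2) * ‖z‖ ^ n)
        ≤ (1 / 2) * (q ^ (n * (n - 1) / 2) * ‖z‖ ^ n) :=
      mul_le_mul_of_nonneg_right hb (by positivity)
    have h3 : (1:ℝ) / 2 * (q ^ (n * (n - 1) / 2) * ‖z‖ ^ n)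
        ≤ 1 / 2 * (∑ i ∈ Finset.range (n + 1), q ^ i) * (q ^ (n * (n - 1) / 2) * ‖z‖ ^ n) := by
      nlinarith [mul_le_mul_of_nonneg_right hS
        (show (0:ℝ) ≤ q ^ (n * (n - 1) / 2) * ‖z‖ ^ n by positivity)]
    linarith
  have heq : (fun n : ℕ => ‖(q : ℂ) ^ (n * (n - 1) / 2) * (-z) ^ n / (qFact q n : ℂ)‖)
      = fun n => q ^ (n * (n - 1) / 2) * ‖z‖ ^ n / qFact q n := funext hnorm
  rw [heq]; exact key

/-- For `0 < q < 1` and `|z| < 1/(1-q)`, one has `e_q(z) · E_q(-z) = 1`. -/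
theorem eq_mul_Eq_neg_eq_one (q : ℝ) (hq0 : 0 < q) (hq1 : q < 1) (z : ℂ)
    (hz : ‖z‖ < 1 / (1 - q)) :
    (∑' n : ℕ, z ^ n / (qFact q n : ℂ)) *
      (∑' n : ℕ, (q : ℂ) ^ (n * (n - 1) / 2) * (-z) ^ n / (qFact q n : ℂ)) = 1 := by
  rw [tsum_mul_tsum_eq_tsum_sum_antidiagonal_of_summable_norm
    (summable_e q hq0 hq1 z hz) (summable_E q hq0 hq1 z)]
  rw [tsum_congr (fun n => coeff_eq q hq0 z n)]
  exact tsum_ite_eq 0 1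
end

section
/- For 0 < q < 1 and every complex number z with |z| < R_q = 2/(1-q), the series ∑_{n=0}^∞ z^n/{n}_q! converges, all factors 1 - q^k(1-q)z/2 are nonzero, and ∑_{n=0}^∞ z^n/{n}_q! = ∏_{k=0}^∞ (1 + q^k(1-q)z/2)/(1 - q^k(1-q)z/2). -/
/-- The symbol `{n}_q = 2(1-q^n)/((1-q)(1+q^(n-1)))` (for `n ≥ 1`). -/
noncomputable def qBrace (q : ℝ) (n : ℕ) : ℝ :=
  2 * (1 - q ^ n) / ((1 - q) * (1 + q ^ (n - 1)))

/-- The factorial `{n}_q! = {1}_q {2}_q ⋯ {n}_q`, with `{0}_q! = 1`. -/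
noncomputable def qBraceFact (q : ℝ) (n : ℕ) : ℝ := ∏ k ∈ Finset.range n, qBrace q (k + 1)

section aux

variable {q : ℝ}

lemma one_le_qBrace (hq0 : 0 < q) (hq1 : q < 1) (n : ℕ) : 1 ≤ qBrace q (n + 1) := by
  unfold qBrace
  simp only [Nat.add_sub_cancel]
  have h1 : (0:ℝ) < 1 - q := by linarith
  have h2 : (0:ℝ) < 1 + q ^ n := by positivity
  rw [le_div_iff₀ (by positivity)]
  have hqn : q ^ n ≤ 1 := pow_le_one₀ hq0.le hq1.le
  have hqnn : 0 < q ^ n := pow_pos hq0 n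
  have : q ^ (n+1) = q * q ^ n := by ring
  nlinarith

lemma one_le_qBraceFact (hq0 : 0 < q) (hq1 : q < 1) (n : ℕ) : 1 ≤ qBraceFact q n := by
  unfold qBraceFact
  calc (1:ℝ) = ∏ _k ∈ Finset.range n, 1 := by simp
  _ ≤ ∏ k ∈ Finset.range n, qBrace q (k + 1) :=
    Finset.prod_le_prod (fun i _ => zero_le_one) (fun i _ => one_le_qBrace hq0 hq1 i)

lemma qBraceFact_pos (hq0 : 0 < q) (hq1 : q < 1) (n : ℕ) : 0 < qBraceFact q n :=
  lt_of_lt_of_le one_pos (one_le_qBraceFact hq0 hq1 n)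

lemma qBrace_key (hq0 : 0 < q) (hq1 : q < 1) (n : ℕ) :
    qBrace q (n + 1) * ((1 - q) * (1 + q ^ n)) = 2 * (1 - q ^ (n + 1)) := by
  unfold qBrace
  simp only [Nat.add_sub_cancel]
  have h1 : (1:ℝ) - q ≠ 0 := by nlinarith
  have h2 : (1:ℝ) + q ^ n ≠ 0 := by positivity
  field_simp

lemma qBraceFact_succ (q : ℝ) (n : ℕ) :
    qBraceFact q (n + 1) = qBraceFact q n * qBrace q (n + 1) := by
  unfold qBraceFact
  exact Finset.prod_range_succ _ _

lemma norm_qBraceFact (hq0 : 0 < q) (hq1 : q < 1) (n : ℕ) :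
    ‖((qBraceFact q n : ℝ) : ℂ)‖ = qBraceFact q n := by
  rw [Complex.norm_real, Real.norm_eq_abs, abs_of_pos (qBraceFact_pos hq0 hq1 n)]

lemma summable_aux (hq0 : 0 < q) (hq1 : q < 1) (y : ℂ) (hy : ‖y‖ < 2 / (1 - q)) :
    Summable (fun n : ℕ => y ^ n / (qBraceFact q n : ℂ)) := by
  have h1 : (0:ℝ) < 1 - q := by linarith
  set R : ℝ := 2 / (1 - q) with hR
  have hRpos : 0 < R := by positivity
  have hy0 : 0 ≤ ‖y‖ := norm_nonneg y
  set r : ℝ := 2 * ‖y‖ / (‖y‖ + R) with hrdef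
  have hden : 0 < ‖y‖ + R := by linarith
  have hr1 : r < 1 := by
    rw [hrdef, div_lt_one hden]; linarith
  have hr0 : 0 ≤ r := by positivity
  apply summable_of_ratio_norm_eventually_le hr1
  -- eventually q^n is small
  set δ : ℝ := (R - ‖y‖) / (3 * R + ‖y‖) with hδdef
  have hδpos : 0 < δ := by
    apply div_pos; linarith; linarith
  have hev : ∀ᶠ n : ℕ in Filter.atTop, q ^ n ≤ δ := by
    have := tendsto_pow_atTop_nhds_zero_of_lt_one hq0.le hq1
    exact this.eventually_le_const hδpos
  filter_upwards [hev] with n hn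
  have hFn : 0 < qBraceFact q n := qBraceFact_pos hq0 hq1 n
  have hBn : 0 < qBrace q (n + 1) := lt_of_lt_of_le one_pos (one_le_qBrace hq0 hq1 n)
  -- key: (‖y‖ + R)/2 ≤ qBrace q (n+1)
  have hkey : (‖y‖ + R) / 2 ≤ qBrace q (n + 1) := by
    have hqn : 0 < q ^ n := pow_pos hq0 n
    have hq1n : q ^ (n + 1) = q * q ^ n := by ring
    have hR2 : (1 - q) * R = 2 := by
      rw [hR]; field_simp
    have hsδ : q ^ n * (3 * R + ‖y‖) ≤ R - ‖y‖ := by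
      rw [hδdef] at hn
      exact (le_div_iff₀ (by linarith)).mp hn
    have hstep : (‖y‖ + R) * (1 + q ^ n) ≤ 2 * R * (1 - q ^ n) := by nlinarith [hsδ]
    have hB : qBrace q (n + 1) = 2 * (1 - q ^ (n + 1)) / ((1 - q) * (1 + q ^ n)) := by
      unfold qBrace
      simp only [Nat.add_sub_cancel]
    rw [hB, le_div_iff₀ (by positivity)]
    have hmul := mul_le_mul_of_nonneg_left hstep (by linarith : (0:ℝ) ≤ (1 - q) / 2)
    have h3 : ((1 - q) * R) * (1 - q ^ n) = 2 * (1 - q ^ n) := by rw [hR2]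
    nlinarith [hmul, h3, mul_nonneg h1.le hqn.le]
  have hyrB : ‖y‖ ≤ r * qBrace q (n + 1) := by
    have : r * ((‖y‖ + R) / 2) = ‖y‖ * (((‖y‖ + R))⁻¹ * (‖y‖ + R)) := by
      rw [hrdef]; field_simp
    have h2 : ‖y‖ = r * ((‖y‖ + R) / 2) := by
      rw [this, inv_mul_cancel₀ (ne_of_gt hden), mul_one]
    rw [h2]
    exact mul_le_mul_of_nonneg_left hkey hr0
  -- now compute norms
  have hnorm : ∀ m : ℕ, ‖y ^ m / (qBraceFact q m : ℂ)‖ = ‖y‖ ^ m / qBraceFact q m := by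
    intro m
    rw [norm_div, norm_pow, norm_qBraceFact hq0 hq1]
  rw [hnorm, hnorm, qBraceFact_succ]
  have e1 : ‖y‖ ^ (n + 1) / (qBraceFact q n * qBrace q (n + 1))
      = (‖y‖ ^ n / qBraceFact q n) * (‖y‖ / qBrace q (n + 1)) := by
    field_simp; ring
  rw [e1, mul_comm r]
  apply mul_le_mul_of_nonneg_left _ (by positivity)
  rw [div_le_iff₀ hBn]
  exact hyrB

end aux

noncomputable def qExpF (q : ℝ) (y : ℂ) : ℂ := ∑' n : ℕ, y ^ n / (qBraceFact q n : ℂ)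

section funceq

variable {q : ℝ}

lemma term_identity (hq0 : 0 < q) (hq1 : q < 1) (y : ℂ) (n : ℕ) :
    y ^ (n + 1) / (qBraceFact q (n + 1) : ℂ) - ((q : ℂ) * y) ^ (n + 1) / (qBraceFact q (n + 1) : ℂ)
      = (1 - (q : ℂ)) * y / 2 *
        (y ^ n / (qBraceFact q n : ℂ) + ((q : ℂ) * y) ^ n / (qBraceFact q n : ℂ)) := by
  have hA : ((qBraceFact q n : ℝ) : ℂ) ≠ 0 := by
    exact_mod_cast ne_of_gt (qBraceFact_pos hq0 hq1 n)
  have hBpos : (0:ℝ) < qBrace q (n + 1) := lt_of_lt_of_le one_pos (one_le_qBrace hq0 hq1 n)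
  have hB : ((qBrace q (n + 1) : ℝ) : ℂ) ≠ 0 := by exact_mod_cast ne_of_gt hBpos
  have hkeyR := qBrace_key hq0 hq1 n
  have hkey : ((qBrace q (n + 1) : ℝ) : ℂ) * ((1 - (q:ℂ)) * (1 + (q:ℂ) ^ n))
      = 2 * (1 - (q:ℂ) ^ (n + 1)) := by exact_mod_cast hkeyR
  have main : 2 * (y ^ (n+1) - ((q:ℂ) * y) ^ (n+1))
      = (1 - (q:ℂ)) * y * (y ^ n + ((q:ℂ) * y) ^ n) * ((qBrace q (n + 1) : ℝ) : ℂ) := by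
    linear_combination (-(y ^ (n + 1))) * hkey
  have hAB : ((qBraceFact q (n + 1) : ℝ) : ℂ)
      = ((qBraceFact q n : ℝ) : ℂ) * ((qBrace q (n + 1) : ℝ) : ℂ) := by
    rw [qBraceFact_succ]; push_cast; ring
  rw [hAB, div_sub_div_same, ← add_div, ← mul_div_assoc,
    div_eq_div_iff (mul_ne_zero hA hB) hA]
  linear_combination (((qBraceFact q n : ℝ) : ℂ) / 2) * main

lemma funceq (hq0 : 0 < q) (hq1 : q < 1) (y : ℂ) (hy : ‖y‖ < 2 / (1 - q)) :
    (1 - (1 - (q : ℂ)) * y / 2) * qExpF q y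
      = (1 + (1 - (q : ℂ)) * y / 2) * qExpF q ((q : ℂ) * y) := by
  have h1 : (0:ℝ) < 1 - q := by linarith
  have hs1 : Summable (fun n : ℕ => y ^ n / (qBraceFact q n : ℂ)) := summable_aux hq0 hq1 y hy
  have hqy : ‖(q : ℂ) * y‖ < 2 / (1 - q) := by
    rw [norm_mul, Complex.norm_real, Real.norm_eq_abs, abs_of_pos hq0]
    calc q * ‖y‖ ≤ 1 * ‖y‖ := mul_le_mul_of_nonneg_right hq1.le (norm_nonneg y)
    _ = ‖y‖ := one_mul _
    _ < 2 / (1 - q) := hy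
  have hs2 : Summable (fun n : ℕ => ((q : ℂ) * y) ^ n / (qBraceFact q n : ℂ)) :=
    summable_aux hq0 hq1 _ hqy
  have hsub : Summable (fun n : ℕ =>
      y ^ n / (qBraceFact q n : ℂ) - ((q : ℂ) * y) ^ n / (qBraceFact q n : ℂ)) := hs1.sub hs2
  have hdiff : qExpF q y - qExpF q ((q : ℂ) * y)
      = ∑' n : ℕ, (y ^ n / (qBraceFact q n : ℂ) - ((q : ℂ) * y) ^ n / (qBraceFact q n : ℂ)) :=
    (hs1.tsum_sub hs2).symm
  rw [hsub.tsum_eq_zero_add] at hdiff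
  simp only [pow_zero] at hdiff
  have h0 : (1 : ℂ) / (qBraceFact q 0 : ℂ) - 1 / (qBraceFact q 0 : ℂ) = 0 := by ring
  rw [h0, zero_add] at hdiff
  have hcongr : ∑' n : ℕ, (y ^ (n+1) / (qBraceFact q (n+1) : ℂ)
        - ((q : ℂ) * y) ^ (n+1) / (qBraceFact q (n+1) : ℂ))
      = ∑' n : ℕ, (1 - (q : ℂ)) * y / 2 *
        (y ^ n / (qBraceFact q n : ℂ) + ((q : ℂ) * y) ^ n / (qBraceFact q n : ℂ)) :=
    tsum_congr fun n => term_identity hq0 hq1 y n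
  rw [hcongr, tsum_mul_left, hs1.tsum_add hs2] at hdiff
  have hdiff' : qExpF q y - qExpF q ((q : ℂ) * y)
      = (1 - (q : ℂ)) * y / 2 * (qExpF q y + qExpF q ((q : ℂ) * y)) := hdiff
  linear_combination hdiff'

lemma tail_bound (hq0 : 0 < q) (hq1 : q < 1) (y : ℂ) (hy : ‖y‖ ≤ 1 / 2) :
    ‖qExpF q y - 1‖ ≤ 2 * ‖y‖ := by
  have h1 : (0:ℝ) < 1 - q := by linarith
  have hR : (2:ℝ) ≤ 2 / (1 - q) := by
    rw [le_div_iff₀ h1]; nlinarith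
  have hyR : ‖y‖ < 2 / (1 - q) := by linarith
  have hs : Summable (fun n : ℕ => y ^ n / (qBraceFact q n : ℂ)) := summable_aux hq0 hq1 y hyR
  have h00 : qBraceFact q 0 = 1 := by simp [qBraceFact]
  have hF : qExpF q y = 1 + ∑' n : ℕ, y ^ (n+1) / (qBraceFact q (n+1) : ℂ) := by
    rw [qExpF, hs.tsum_eq_zero_add, pow_zero, h00]
    norm_num
  rw [hF, add_sub_cancel_left]
  have hbound : ∀ n : ℕ, ‖y ^ (n+1) / (qBraceFact q (n+1) : ℂ)‖ ≤ ‖y‖ * (1/2) ^ n := by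
    intro n
    rw [norm_div, norm_pow, norm_qBraceFact hq0 hq1]
    have hf1 : 1 ≤ qBraceFact q (n+1) := one_le_qBraceFact hq0 hq1 (n+1)
    calc ‖y‖ ^ (n+1) / qBraceFact q (n+1) ≤ ‖y‖ ^ (n+1) / 1 := by
          apply div_le_div_of_nonneg_left (by positivity) one_pos hf1
      _ = ‖y‖ * ‖y‖ ^ n := by rw [div_one, pow_succ]; ring
      _ ≤ ‖y‖ * (1/2) ^ n := by
          apply mul_le_mul_of_nonneg_left _ (norm_nonneg y)
          exact pow_le_pow_left₀ (norm_nonneg y) hy n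
  have hgs : Summable (fun n : ℕ => ‖y‖ * (1/2 : ℝ) ^ n) :=
    (summable_geometric_of_lt_one (by norm_num) (by norm_num)).mul_left _
  have hsn : Summable (fun n : ℕ => ‖y ^ (n+1) / (qBraceFact q (n+1) : ℂ)‖) :=
    Summable.of_nonneg_of_le (fun n => norm_nonneg _) hbound hgs
  calc ‖∑' n : ℕ, y ^ (n+1) / (qBraceFact q (n+1) : ℂ)‖
      ≤ ∑' n : ℕ, ‖y ^ (n+1) / (qBraceFact q (n+1) : ℂ)‖ := norm_tsum_le_tsum_norm hsn
    _ ≤ ∑' n : ℕ, ‖y‖ * (1/2:ℝ) ^ n := hsn.tsum_le_tsum hbound hgs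
    _ = ‖y‖ * ∑' n : ℕ, (1/2:ℝ) ^ n := tsum_mul_left
    _ = ‖y‖ * 2 := by rw [tsum_geometric_of_lt_one (by norm_num) (by norm_num)]; norm_num
    _ = 2 * ‖y‖ := by ring

end funceq

open Filter Topology

/-- For `0 < q < 1` and `|z| < 2/(1-q)`, the series `∑ z^n/{n}_q!` converges, the
factors `1 - q^k(1-q)z/2` are nonzero, and the series equals the infinite product
`∏_{k=0}^∞ (1 + q^k(1-q)z/2)/(1 - q^k(1-q)z/2)`. -/
theorem improved_qExp_eq_tprod (q : ℝ) (hq0 : 0 < q) (hq1 : q < 1) (z : ℂ)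
    (hz : ‖z‖ < 2 / (1 - q)) :
    Summable (fun n : ℕ => z ^ n / (qBraceFact q n : ℂ)) ∧
    (∀ k : ℕ, 1 - (q : ℂ) ^ k * (1 - (q : ℂ)) * z / 2 ≠ 0) ∧
    (∑' n : ℕ, z ^ n / (qBraceFact q n : ℂ)) =
      ∏' k : ℕ, (1 + (q : ℂ) ^ k * (1 - (q : ℂ)) * z / 2) /
        (1 - (q : ℂ) ^ k * (1 - (q : ℂ)) * z / 2) := by
  have h1 : (0:ℝ) < 1 - q := by linarith
  set w : ℂ := (1 - (q:ℂ)) * z / 2 with hwdef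
  have hnw : ‖w‖ = (1 - q) * ‖z‖ / 2 := by
    have e : w = ((1 - q : ℝ) : ℂ) * z / 2 := by rw [hwdef]; push_cast; ring
    rw [e, norm_div, norm_mul, Complex.norm_real, Real.norm_eq_abs, abs_of_pos h1]
    norm_num
  have hw1 : ‖w‖ < 1 := by
    rw [hnw]
    rw [lt_div_iff₀ h1] at hz
    nlinarith
  have hnqk : ∀ k : ℕ, ‖(q:ℂ) ^ k‖ = q ^ k := by
    intro k
    rw [norm_pow, Complex.norm_real, Real.norm_eq_abs, abs_of_pos hq0]
  have hawk : ∀ k : ℕ, (q : ℂ) ^ k * (1 - (q : ℂ)) * z / 2 = (q:ℂ) ^ k * w := by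
    intro k; rw [hwdef]; ring
  have hna : ∀ k : ℕ, ‖(q : ℂ) ^ k * (1 - (q : ℂ)) * z / 2‖ = q ^ k * ‖w‖ := by
    intro k; rw [hawk k, norm_mul, hnqk]
  have hna1 : ∀ k : ℕ, ‖(q : ℂ) ^ k * (1 - (q : ℂ)) * z / 2‖ < 1 := by
    intro k
    rw [hna k]
    calc q ^ k * ‖w‖ ≤ 1 * ‖w‖ :=
      mul_le_mul_of_nonneg_right (pow_le_one₀ hq0.le hq1.le) (norm_nonneg w)
    _ = ‖w‖ := one_mul _
    _ < 1 := hw1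
  have hden : ∀ k : ℕ, 1 - (q : ℂ) ^ k * (1 - (q : ℂ)) * z / 2 ≠ 0 := by
    intro k h
    rw [sub_eq_zero] at h
    have := hna1 k
    rw [← h] at this
    norm_num at this
  have hnum : ∀ k : ℕ, 1 + (q : ℂ) ^ k * (1 - (q : ℂ)) * z / 2 ≠ 0 := by
    intro k h
    have h' : (q : ℂ) ^ k * (1 - (q : ℂ)) * z / 2 = -1 := by linear_combination h
    have := hna1 k
    rw [h'] at this
    norm_num at this
  have hs : Summable (fun n : ℕ => z ^ n / (qBraceFact q n : ℂ)) := summable_aux hq0 hq1 z hz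
  refine ⟨hs, hden, ?_⟩
  set f : ℕ → ℂ := fun k => (1 + (q : ℂ) ^ k * (1 - (q : ℂ)) * z / 2) /
      (1 - (q : ℂ) ^ k * (1 - (q : ℂ)) * z / 2) with hfdef
  show qExpF q z = ∏' k : ℕ, f k
  have hzk : ∀ N : ℕ, ‖(q:ℂ) ^ N * z‖ < 2 / (1 - q) := by
    intro N
    rw [norm_mul, hnqk]
    calc q ^ N * ‖z‖ ≤ 1 * ‖z‖ :=
      mul_le_mul_of_nonneg_right (pow_le_one₀ hq0.le hq1.le) (norm_nonneg z)
    _ = ‖z‖ := one_mul _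
    _ < 2 / (1 - q) := hz
  -- the iterated functional equation
  have hind : ∀ N : ℕ, qExpF q z = (∏ k ∈ Finset.range N, f k) * qExpF q ((q:ℂ) ^ N * z) := by
    intro N
    induction N with
    | zero => simp
    | succ N ih =>
      have hfe := funceq hq0 hq1 ((q:ℂ) ^ N * z) (hzk N)
      have e1 : (1 - (q:ℂ)) * ((q:ℂ) ^ N * z) / 2 = (q : ℂ) ^ N * (1 - (q : ℂ)) * z / 2 := by
        ring
      have e2 : (q:ℂ) * ((q:ℂ) ^ N * z) = (q:ℂ) ^ (N+1) * z := by ring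
      rw [e1, e2] at hfe
      have hstep : qExpF q ((q:ℂ) ^ N * z) = f N * qExpF q ((q:ℂ) ^ (N+1) * z) := by
        rw [hfdef]
        rw [div_mul_eq_mul_div, eq_div_iff (hden N)]
        linear_combination hfe
      rw [Finset.prod_range_succ, ih, hstep]
      ring
  -- the tail tends to 1
  have htz : Tendsto (fun N : ℕ => q ^ N * (2 * ‖z‖)) atTop (𝓝 0) := by
    have := (tendsto_pow_atTop_nhds_zero_of_lt_one hq0.le hq1).mul_const (2 * ‖z‖)
    simpa using this
  have hev : ∀ᶠ N : ℕ in atTop, ‖(q:ℂ) ^ N * z‖ ≤ 1 / 2 := by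
    have h2 : Tendsto (fun N : ℕ => q ^ N * ‖z‖) atTop (𝓝 0) := by
      have := (tendsto_pow_atTop_nhds_zero_of_lt_one hq0.le hq1).mul_const ‖z‖
      simpa using this
    filter_upwards [h2.eventually_le_const (by norm_num : (0:ℝ) < 1/2)] with N hN
    rw [norm_mul, hnqk]
    exact hN
  have hT1 : Tendsto (fun N : ℕ => qExpF q ((q:ℂ) ^ N * z)) atTop (𝓝 1) := by
    have h0 : Tendsto (fun N : ℕ => qExpF q ((q:ℂ) ^ N * z) - 1) atTop (𝓝 0) := by
      apply squeeze_zero_norm' _ htz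
      filter_upwards [hev] with N hN
      calc ‖qExpF q ((q:ℂ) ^ N * z) - 1‖ ≤ 2 * ‖(q:ℂ) ^ N * z‖ := tail_bound hq0 hq1 _ hN
        _ = q ^ N * (2 * ‖z‖) := by rw [norm_mul, hnqk]; ring
    have := h0.add_const 1
    simpa using this
  -- multipliability of the product
  have hx : ∀ k : ℕ, f k = 1 + (q : ℂ) ^ k * (1 - (q : ℂ)) * z /
      (1 - (q : ℂ) ^ k * (1 - (q : ℂ)) * z / 2) := by
    intro k
    rw [hfdef]
    rw [div_eq_iff (hden k), add_mul, one_mul, div_mul_cancel₀ _ (hden k)]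
    ring
  have hxb : ∀ k : ℕ, ‖(q : ℂ) ^ k * (1 - (q : ℂ)) * z /
      (1 - (q : ℂ) ^ k * (1 - (q : ℂ)) * z / 2)‖ ≤ 2 * ‖w‖ / (1 - ‖w‖) * q ^ k := by
    intro k
    have hd : (1:ℝ) - ‖w‖ ≤ ‖1 - (q : ℂ) ^ k * (1 - (q : ℂ)) * z / 2‖ := by
      calc (1:ℝ) - ‖w‖ ≤ 1 - ‖(q : ℂ) ^ k * (1 - (q : ℂ)) * z / 2‖ := by
            have := hna k
            have h2 : q ^ k * ‖w‖ ≤ ‖w‖ := by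
              calc q ^ k * ‖w‖ ≤ 1 * ‖w‖ :=
                mul_le_mul_of_nonneg_right (pow_le_one₀ hq0.le hq1.le) (norm_nonneg w)
              _ = ‖w‖ := one_mul _
            linarith [hna k]
        _ ≤ ‖(1:ℂ)‖ - ‖(q : ℂ) ^ k * (1 - (q : ℂ)) * z / 2‖ := by norm_num
        _ ≤ ‖1 - (q : ℂ) ^ k * (1 - (q : ℂ)) * z / 2‖ := norm_sub_norm_le _ _
    have hdp : (0:ℝ) < 1 - ‖w‖ := by linarith
    have hnum_norm : ‖(q : ℂ) ^ k * (1 - (q : ℂ)) * z‖ = 2 * (q ^ k * ‖w‖) := by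
      have e : (q : ℂ) ^ k * (1 - (q : ℂ)) * z = 2 * ((q : ℂ) ^ k * (1 - (q : ℂ)) * z / 2) := by
        ring
      rw [e, norm_mul, hna k]
      norm_num
    rw [norm_div, hnum_norm]
    calc 2 * (q ^ k * ‖w‖) / ‖1 - (q : ℂ) ^ k * (1 - (q : ℂ)) * z / 2‖
        ≤ 2 * (q ^ k * ‖w‖) / (1 - ‖w‖) := by
          apply div_le_div_of_nonneg_left (by positivity) hdp hd
      _ = 2 * ‖w‖ / (1 - ‖w‖) * q ^ k := by ring
  have hlog : Summable (fun k : ℕ => Complex.log (f k)) := by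
    apply Summable.of_norm_bounded_eventually (g := fun k => 3/2 * (2 * ‖w‖ / (1 - ‖w‖)) * q ^ k)
    · exact ((summable_geometric_of_lt_one hq0.le hq1).mul_left _)
    · rw [Nat.cofinite_eq_atTop]
      have hevk : ∀ᶠ k : ℕ in atTop, 2 * ‖w‖ / (1 - ‖w‖) * q ^ k ≤ 1/2 := by
        have := (tendsto_pow_atTop_nhds_zero_of_lt_one hq0.le hq1).const_mul
          (2 * ‖w‖ / (1 - ‖w‖))
        simp only [mul_zero] at this
        exact this.eventually_le_const (by norm_num : (0:ℝ) < 1/2)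
      filter_upwards [hevk] with k hk
      rw [hx k]
      calc ‖Complex.log (1 + (q : ℂ) ^ k * (1 - (q : ℂ)) * z /
              (1 - (q : ℂ) ^ k * (1 - (q : ℂ)) * z / 2))‖
          ≤ 3/2 * ‖(q : ℂ) ^ k * (1 - (q : ℂ)) * z /
              (1 - (q : ℂ) ^ k * (1 - (q : ℂ)) * z / 2)‖ :=
            Complex.norm_log_one_add_half_le_self (le_trans (hxb k) hk)
        _ ≤ 3/2 * (2 * ‖w‖ / (1 - ‖w‖) * q ^ k) := by
            apply mul_le_mul_of_nonneg_left (hxb k) (by norm_num)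
        _ = 3/2 * (2 * ‖w‖ / (1 - ‖w‖)) * q ^ k := by ring
  have hfne : ∀ k : ℕ, f k ≠ 0 := fun k => div_ne_zero (hnum k) (hden k)
  have hmult : Multipliable f :=
    Complex.multipliable_of_summable_log hlog
  have hprodlim : Tendsto (fun N : ℕ => ∏ k ∈ Finset.range N, f k) atTop (𝓝 (∏' k, f k)) :=
    hmult.hasProd.tendsto_prod_nat
  have hcomb : Tendsto (fun N : ℕ => (∏ k ∈ Finset.range N, f k) * qExpF q ((q:ℂ) ^ N * z))
      atTop (𝓝 ((∏' k, f k) * 1)) := hprodlim.mul hT1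
  have hconst : Tendsto (fun N : ℕ => (∏ k ∈ Finset.range N, f k) * qExpF q ((q:ℂ) ^ N * z))
      atTop (𝓝 (qExpF q z)) := by
    have e : (fun N : ℕ => (∏ k ∈ Finset.range N, f k) * qExpF q ((q:ℂ) ^ N * z))
        = fun _ => qExpF q z := funext fun N => (hind N).symm
    rw [e]
    exact tendsto_const_nhds
  have := tendsto_nhds_unique hconst hcomb
  rw [mul_one] at this
  exact this
end
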